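/- Let m ≤ n be integers with m, n ≥ 1, let r, B, C > 0, D ≥ 0, h > 0, t ≥ 0, with rBm - D ≠ 0 and rBn - D ≠ 0. Then φ_n(h,t) ≥ φ_m(h,t), where φ_k is the solution of the logistic ODE y' = y(rBk - D - Cy) with y(0) = h. -/

import Mathlib

noncomputable def phi (r B C D : ℝ) (n : ℕ) (h t : ℝ) : ℝ :=
  h * Real.exp (t * (r * B * n - D)) /
    (1 + h * C / (r * B * n - D) * (Real.exp (t * (r * B * n - D)) - 1))

lemma int_repr (c t : ℝ) (hc : c ≠ 0) :
    ∫ s in (0:ℝ)..t, Real.exp (-(c * s)) = (1 - Real.exp (-(c * t))) / c := by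
  have h1 : (∫ s in (0:ℝ)..t, Real.exp ((-c) * s))
      = (-c)⁻¹ • ∫ x in ((-c) * 0)..((-c) * t), Real.exp x :=
    intervalIntegral.integral_comp_mul_left Real.exp (neg_ne_zero.mpr hc)
  simp only [neg_mul, mul_zero, integral_exp, Real.exp_zero, smul_eq_mul] at h1
  rw [h1]
  field_simp
  ring

lemma f_nonneg (c t : ℝ) (hc : c ≠ 0) (ht : 0 ≤ t) :
    0 ≤ (1 - Real.exp (-(c * t))) / c := by
  rw [← int_repr c t hc]
  exact intervalIntegral.integral_nonneg ht (fun s _ => (Real.exp_pos _).le)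

lemma f_mono (a b t : ℝ) (hab : a ≤ b) (ha : a ≠ 0) (hb : b ≠ 0) (ht : 0 ≤ t) :
    (1 - Real.exp (-(b * t))) / b ≤ (1 - Real.exp (-(a * t))) / a := by
  rw [← int_repr a t ha, ← int_repr b t hb]
  apply intervalIntegral.integral_mono_on ht
  · exact (Real.continuous_exp.comp (by continuity)).intervalIntegrable _ _
  · exact (Real.continuous_exp.comp (by continuity)).intervalIntegrable _ _
  · intro s hs
    apply Real.exp_le_exp.mpr
    nlinarith [hs.1]

lemma phi_eq (r B C D : ℝ) (k : ℕ) (h t : ℝ) (hk : r * B * k - D ≠ 0) :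
    phi r B C D k h t
      = h / (Real.exp (-((r * B * k - D) * t))
          + h * C * ((1 - Real.exp (-((r * B * k - D) * t))) / (r * B * k - D))) := by
  unfold phi
  set a := r * B * k - D with ha
  have he : Real.exp (t * a) ≠ 0 := Real.exp_ne_zero _
  rw [show -(a * t) = -(t * a) by ring, Real.exp_neg]
  field_simp

theorem stmt_14 (r B C D : ℝ) (hr : 0 < r) (hB : 0 < B) (hC : 0 < C) (hD : 0 ≤ D)
    (m n : ℕ) (hm : 1 ≤ m) (hmn : m ≤ n)
    (ham : r * B * m - D ≠ 0) (han : r * B * n - D ≠ 0)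
    (h t : ℝ) (hh : 0 < h) (ht : 0 ≤ t) :
    phi r B C D m h t ≤ phi r B C D n h t := by
  set am := r * B * m - D with ham'
  set an := r * B * n - D with han'
  have hmn' : am ≤ an := by
    have : (m : ℝ) ≤ n := Nat.cast_le.mpr hmn
    have := mul_le_mul_of_nonneg_left this (mul_pos hr hB).le
    simp only [ham', han']; linarith
  rw [phi_eq r B C D m h t ham, phi_eq r B C D n h t han]
  have hdn : 0 < Real.exp (-(an * t)) + h * C * ((1 - Real.exp (-(an * t))) / an) := by
    have h0 := f_nonneg an t han ht
    have := mul_nonneg (mul_nonneg hh.le hC.le) h0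
    linarith [Real.exp_pos (-(an * t))]
  have hle : Real.exp (-(an * t)) + h * C * ((1 - Real.exp (-(an * t))) / an)
      ≤ Real.exp (-(am * t)) + h * C * ((1 - Real.exp (-(am * t))) / am) := by
    have h1 := f_mono am an t hmn' ham han ht
    have h2 : Real.exp (-(an * t)) ≤ Real.exp (-(am * t)) := by
      apply Real.exp_le_exp.mpr; nlinarith
    have h3 := mul_le_mul_of_nonneg_left h1 (mul_nonneg hh.le hC.le)
    linarith [mul_assoc h C ((1 - Real.exp (-(an * t))) / an), mul_assoc h C ((1 - Real.exp (-(am * t))) / am)]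
  exact div_le_div_of_nonneg_left hh.le hdn hle
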